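/- Let k be a positive definite function on S, let S = S_1 ∪ ... ∪ S_t be a partition of S into disjoint subdomains, and let X̲ be a finite set of distinct points in S with k(X̲,X̲) invertible. Then the function ξ_2 defined by ξ_2(x,x') = k(x,x') − k(x,X̲) k(X̲,X̲)^{-1} k(X̲,x') if x and x' lie in the same subdomain S_j, and ξ_2(x,x') = 0 otherwise, is a positive definite function on S. -/

import Mathlib

/-- The Gram matrix `k(X̲,X̲)` of a kernel `k` at the landmark points `u 0, …, u (r-1)`. -/
noncomputable def gramMatrix {S : Type*} (k : S → S → ℝ) {r : ℕ} (u : Fin r → S) :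
    Matrix (Fin r) (Fin r) ℝ :=
  Matrix.of fun a b => k (u a) (u b)

/-- The Nyström approximation `k(x,X̲) k(X̲,X̲)⁻¹ k(X̲,x')`. -/
noncomputable def nystrom {S : Type*} (k : S → S → ℝ) {r : ℕ} (u : Fin r → S)
    (x x' : S) : ℝ :=
  ∑ a, ∑ b, k x (u a) * (gramMatrix k u)⁻¹ a b * k (u b) x'

/-- A symmetric function `k : S × S → ℝ` is positive definite if every quadratic form
`∑ᵢⱼ αᵢ αⱼ k(xᵢ,xⱼ)` is nonnegative. -/
def IsPosDefKernel {S : Type*} (k : S → S → ℝ) : Prop :=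
  (∀ x x', k x x' = k x' x) ∧
  ∀ (n : ℕ) (x : Fin n → S) (α : Fin n → ℝ),
    0 ≤ ∑ i, ∑ j, α i * α j * k (x i) (x j)

/-- A symmetric function `k : S × S → ℝ` is strictly positive definite if every quadratic
form `∑ᵢⱼ αᵢ αⱼ k(xᵢ,xⱼ)` at distinct points with not-all-zero coefficients is positive. -/
def IsStrictPosDefKernel {S : Type*} (k : S → S → ℝ) : Prop :=
  (∀ x x', k x x' = k x' x) ∧
  ∀ (n : ℕ) (x : Fin n → S) (α : Fin n → ℝ),
    Function.Injective x → α ≠ 0 →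
      0 < ∑ i, ∑ j, α i * α j * k (x i) (x j)

open Matrix in
lemma gram_posSemidef {S : Type*} {k : S → S → ℝ} (hk : IsPosDefKernel k)
    {m : ℕ} (y : Fin m → S) :
    (Matrix.of fun i j => k (y i) (y j)).PosSemidef := by
  refine Matrix.PosSemidef.of_dotProduct_mulVec_nonneg ?_ ?_
  · ext i j
    simp only [Matrix.conjTranspose_apply, Matrix.of_apply, star_trivial]
    exact hk.1 (y j) (y i)
  · intro v
    calc (0:ℝ) ≤ ∑ i, ∑ j, v i * v j * k (y i) (y j) := hk.2 m y v
      _ = dotProduct (star v) ((Matrix.of fun i j => k (y i) (y j)).mulVec v) := by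
          simp only [dotProduct, Matrix.mulVec, Matrix.of_apply, Pi.star_apply,
            star_trivial, Finset.mul_sum]
          exact Finset.sum_congr rfl fun i _ => Finset.sum_congr rfl fun j _ => by ring

open Matrix in
lemma nystrom_symm {S : Type*} {k : S → S → ℝ} (hk : IsPosDefKernel k)
    {r : ℕ} (u : Fin r → S) (x x' : S) :
    nystrom k u x x' = nystrom k u x' x := by
  have hG : ((gramMatrix k u)⁻¹).IsHermitian := ((gram_posSemidef hk u).1).inv
  have hGinv : ∀ a b, (gramMatrix k u)⁻¹ a b = (gramMatrix k u)⁻¹ b a := by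
    intro a b
    conv_lhs => rw [← hG]
    simp [Matrix.conjTranspose_apply]
  rw [nystrom, nystrom, Finset.sum_comm]
  refine Finset.sum_congr rfl fun c _ => Finset.sum_congr rfl fun d _ => ?_
  rw [hGinv d c, hk.1 x (u d), hk.1 (u c) x']
  ring

open Matrix in
lemma schur_posDefKernel {S : Type*} {k : S → S → ℝ} (hk : IsPosDefKernel k)
    {r : ℕ} (u : Fin r → S) (hK : IsUnit (gramMatrix k u).det) :
    IsPosDefKernel (fun x x' => k x x' - nystrom k u x x') := by
  constructor
  · intro x x'
    simp only
    rw [hk.1 x x', nystrom_symm hk u x x']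
  · intro n x α
    have hGpsd : (gramMatrix k u).PosSemidef := gram_posSemidef hk u
    haveI : Invertible (gramMatrix k u) := (gramMatrix k u).invertibleOfIsUnitDet hK
    have hGpd : (gramMatrix k u).PosDef := by
      refine Matrix.PosDef.of_dotProduct_mulVec_pos hGpsd.1 fun v hv => ?_
      rcases lt_or_eq_of_le (hGpsd.dotProduct_mulVec_nonneg v) with h | h
      · exact h
      · exfalso
        have h0 : (gramMatrix k u).mulVec v = 0 :=
          (hGpsd.dotProduct_mulVec_zero_iff v).mp h.symm
        have hinj : Function.Injective ((gramMatrix k u).mulVec) :=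
          Matrix.mulVec_injective_iff_isUnit.mpr
            ((Matrix.isUnit_iff_isUnit_det _).mpr hK)
        exact hv (hinj (by rw [h0, Matrix.mulVec_zero]))
    set B : Matrix (Fin n) (Fin r) ℝ := Matrix.of (fun i a => k (x i) (u a)) with hB
    set K : Matrix (Fin n) (Fin n) ℝ := Matrix.of (fun i j => k (x i) (x j)) with hKK
    have hbig : (Matrix.fromBlocks K B Bᴴ (gramMatrix k u)).PosSemidef := by
      have hw := (gram_posSemidef hk
        (fun i : Fin (n + r) => Sum.elim x u (finSumFinEquiv.symm i))).submatrix
        (finSumFinEquiv : Fin n ⊕ Fin r ≃ Fin (n + r))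
      have heq : (Matrix.of fun i j : Fin (n + r) =>
            k (Sum.elim x u (finSumFinEquiv.symm i)) (Sum.elim x u (finSumFinEquiv.symm j))).submatrix
            (finSumFinEquiv : Fin n ⊕ Fin r ≃ Fin (n + r))
            (finSumFinEquiv : Fin n ⊕ Fin r ≃ Fin (n + r))
          = Matrix.fromBlocks K B Bᴴ (gramMatrix k u) := by
        ext p q
        rcases p with p | p <;> rcases q with q | q <;>
          simp only [Matrix.submatrix_apply, Matrix.of_apply, Equiv.symm_apply_apply,
            Sum.elim_inl, Sum.elim_inr, Matrix.fromBlocks_apply₁₁, Matrix.fromBlocks_apply₁₂,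
            Matrix.fromBlocks_apply₂₁, Matrix.fromBlocks_apply₂₂, Matrix.conjTranspose_apply,
            star_trivial, hB, hKK, gramMatrix] <;>
          first | rfl | exact hk.1 (u p) (x q)
      rw [← heq]
      exact hw
    have hSchur := (Matrix.PosDef.fromBlocks₂₂ K B hGpd).mp hbig
    have hN : ∀ i j, (B * (gramMatrix k u)⁻¹ * Bᴴ) i j = nystrom k u (x i) (x j) := by
      intro i j
      rw [nystrom]
      simp only [Matrix.mul_apply, Finset.sum_mul, hB, Matrix.of_apply,
        Matrix.conjTranspose_apply, star_trivial]
      rw [Finset.sum_comm]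
      refine Finset.sum_congr rfl fun a _ => Finset.sum_congr rfl fun b _ => ?_
      rw [hk.1 (x j) (u b)]
    calc (0:ℝ) ≤ dotProduct (star α) ((K - B * (gramMatrix k u)⁻¹ * Bᴴ).mulVec α) :=
          hSchur.dotProduct_mulVec_nonneg α
      _ = ∑ i, ∑ j, α i * α j * (k (x i) (x j) - nystrom k u (x i) (x j)) := by
        simp only [dotProduct, Matrix.mulVec, dotProduct, Matrix.sub_apply,
          Pi.star_apply, star_trivial, Finset.mul_sum]
        refine Finset.sum_congr rfl fun i _ => Finset.sum_congr rfl fun j _ => ?_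
        rw [hN i j, hKK]
        simp only [Matrix.of_apply]
        ring

/-- if `k` is positive definite, `S = S_1 ∪ ⋯ ∪ S_t` is a partition into
disjoint subdomains, and `X̲` is a finite set of distinct points with `k(X̲,X̲)`
invertible, then the function `ξ₂` equal to the Schur complement
`k(x,x') − k(x,X̲) k(X̲,X̲)⁻¹ k(X̲,x')` when `x, x'` lie in a common subdomain and equal
to `0` otherwise, is positive definite on `S`. -/
theorem schur_piecewise_posDef {S : Type*} {t : ℕ} (k : S → S → ℝ)
    (hk : IsPosDefKernel k)
    (P : Fin t → Set S)
    (hcover : ∀ x : S, ∃ j, x ∈ P j)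
    (hdisj : ∀ j j' : Fin t, j ≠ j' → Disjoint (P j) (P j'))
    {r : ℕ} (u : Fin r → S) (hu : Function.Injective u)
    (hK : IsUnit (gramMatrix k u).det)
    (ξ₂ : S → S → ℝ)
    (hξ_same : ∀ x x', (∃ j, x ∈ P j ∧ x' ∈ P j) →
      ξ₂ x x' = k x x' - nystrom k u x x')
    (hξ_diff : ∀ x x', (¬ ∃ j, x ∈ P j ∧ x' ∈ P j) → ξ₂ x x' = 0) :
    IsPosDefKernel ξ₂ := by
  classical
  have hA := schur_posDefKernel hk u hK
  have hmem : ∀ x : S, x ∈ P (hcover x).choose := fun x => (hcover x).choose_spec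
  set jx : S → Fin t := fun x => (hcover x).choose with hjx
  have huniq : ∀ (x : S) (j : Fin t), x ∈ P j → j = jx x := by
    intro x j hj
    by_contra hne
    exact Set.disjoint_left.mp (hdisj j (jx x) hne) hj (hmem x)
  have hξ : ∀ a b : S, ξ₂ a b = if jx a = jx b then k a b - nystrom k u a b else 0 := by
    intro a b
    by_cases h : jx a = jx b
    · rw [if_pos h]
      exact hξ_same a b ⟨jx b, h ▸ hmem a, hmem b⟩
    · rw [if_neg h]
      apply hξ_diff
      rintro ⟨j, hja, hjb⟩
      exact h ((huniq a j hja).symm.trans (huniq b j hjb))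
  constructor
  · intro x x'
    rw [hξ, hξ]
    by_cases h : jx x = jx x'
    · rw [if_pos h, if_pos h.symm]
      exact hA.1 x x'
    · rw [if_neg h, if_neg fun h' => h h'.symm]
  · intro n x α
    have key : ∑ i, ∑ j, α i * α j * ξ₂ (x i) (x j)
        = ∑ c : Fin t, ∑ i, ∑ j,
            (if jx (x i) = c then α i else 0) * (if jx (x j) = c then α j else 0)
              * (k (x i) (x j) - nystrom k u (x i) (x j)) := by
      calc ∑ i, ∑ j, α i * α j * ξ₂ (x i) (x j)
          = ∑ i, ∑ j, ∑ c : Fin t,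
              (if jx (x i) = c then α i else 0) * (if jx (x j) = c then α j else 0)
                * (k (x i) (x j) - nystrom k u (x i) (x j)) := by
            refine Finset.sum_congr rfl fun i _ => Finset.sum_congr rfl fun j _ => ?_
            rw [hξ]
            by_cases h : jx (x i) = jx (x j)
            · rw [if_pos h, Finset.sum_eq_single (jx (x j)), if_pos h, if_pos rfl]
              · intro c _ hc
                rw [if_neg fun hh : jx (x j) = c => hc hh.symm]
                ring
              · simp
            · rw [if_neg h, mul_zero]
              refine (Finset.sum_eq_zero fun c _ => ?_).symm
              by_cases h1 : jx (x i) = c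
              · rw [if_neg fun h2 : jx (x j) = c => h (h1.trans h2.symm), mul_zero, zero_mul]
              · rw [if_neg h1, zero_mul, zero_mul]
        _ = ∑ i, ∑ c : Fin t, ∑ j,
              (if jx (x i) = c then α i else 0) * (if jx (x j) = c then α j else 0)
                * (k (x i) (x j) - nystrom k u (x i) (x j)) :=
            Finset.sum_congr rfl fun i _ => Finset.sum_comm
        _ = ∑ c : Fin t, ∑ i, ∑ j,
              (if jx (x i) = c then α i else 0) * (if jx (x j) = c then α j else 0)
                * (k (x i) (x j) - nystrom k u (x i) (x j)) :=
            Finset.sum_comm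
    rw [key]
    refine Finset.sum_nonneg fun c _ => ?_
    exact hA.2 n x fun i => if jx (x i) = c then α i else 0
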